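/- Let (K,v) be a henselian valued field and F, G ∈ K[x] monic irreducible polynomials. Then v_F(G)/deg(G) = v_G(F)/deg(F), i.e., v(G(θ))/deg(G) = v(F(ω))/deg(F) for θ a root of F and ω a root of G; both equal the average v(Res(F,G))/(deg(F)·deg(G)) of the values v(θ−ω') over pairs of roots, where Res denotes the resultant. -/

import Mathlib

open Polynomial

section Preamble

variable {Λ : Type*} [AddCommGroup Λ] [LinearOrder Λ] [IsOrderedAddMonoid Λ]

/-- A (Krull) valuation on a commutative ring, written additively, with value `⊤` at `0`. -/
def IsVal {R : Type*} [CommRing R] (μ : R → WithTop Λ) : Prop :=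
  μ 0 = ⊤ ∧ μ 1 = 0 ∧ (∀ a b, μ (a * b) = μ a + μ b) ∧ ∀ a b, min (μ a) (μ b) ≤ μ (a + b)

variable {K : Type*} [Field K]

/-- `μ` is a valuation on `K[x]` whose restriction to `K` is `v`. -/
def ExtendsVal (v : K → WithTop Λ) (μ : Polynomial K → WithTop Λ) : Prop :=
  ∀ a : K, μ (Polynomial.C a) = v a

/-- `a ∼_μ b`: the initial terms of `a` and `b` in the graded algebra of `μ` coincide. -/
def MuEquiv (μ : Polynomial K → WithTop Λ) (a b : Polynomial K) : Prop :=
  (μ a = μ b ∧ μ a < μ (a - b)) ∨ (μ a = ⊤ ∧ μ b = ⊤)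

/-- `h ∣_μ g` : the initial term of `h` divides the initial term of `g` in the
graded algebra `G_μ`. -/
def MuDvd (μ : Polynomial K → WithTop Λ) (h g : Polynomial K) : Prop :=
  ∃ c, MuEquiv μ (h * c) g

/-- `g` is `μ`-minimal: `g ∤_μ f` for all nonzero `f` of degree smaller than `deg g`. -/
def MuMinimal (μ : Polynomial K → WithTop Λ) (g : Polynomial K) : Prop :=
  ∀ f : Polynomial K, f ≠ 0 → f.degree < g.degree → ¬ MuDvd μ g f

/-- `g` is `μ`-irreducible: the principal ideal of `G_μ` generated by the initial term of `g`
is a nonzero prime ideal. -/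
def MuIrreducible (μ : Polynomial K → WithTop Λ) (g : Polynomial K) : Prop :=
  μ g ≠ ⊤ ∧ ¬ MuDvd μ g 1 ∧ ∀ a b : Polynomial K, MuDvd μ g (a * b) → MuDvd μ g a ∨ MuDvd μ g b

/-- A (MacLane–Vaquié) key polynomial for `μ`: monic, `μ`-minimal and `μ`-irreducible. -/
def IsKeyPol (μ : Polynomial K → WithTop Λ) (φ : Polynomial K) : Prop :=
  φ.Monic ∧ MuMinimal μ φ ∧ MuIrreducible μ φ

/-- A key polynomial for `μ` of minimal degree. -/
def MinKeyPol (μ : Polynomial K → WithTop Λ) (φ : Polynomial K) : Prop :=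
  IsKeyPol μ φ ∧ ∀ ψ : Polynomial K, IsKeyPol μ ψ → φ.degree ≤ ψ.degree

/-- The coefficients of the `g`-adic expansion `f = ∑ a_s g^s`, `deg a_s < deg g`. -/
noncomputable def adicCoeff (g : Polynomial K) : Polynomial K → ℕ → Polynomial K
  | f, 0 => f %ₘ g
  | f, (s + 1) => adicCoeff g (f /ₘ g) s

/-- The truncation `μ_g` of `μ` : `μ_g (∑ a_s g^s) = min_s μ (a_s g^s)`. -/
noncomputable def truncVal (μ : Polynomial K → WithTop Λ) (g f : Polynomial K) : WithTop Λ :=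
  (Finset.range (f.natDegree + 1)).inf fun s => μ (adicCoeff g f s * g ^ s)

/-- The augmented valuation `[μ; φ, γ]`, acting on `φ`-expansions by
`ν(∑ a_s φ^s) = min_s (μ(a_s) + s γ)`. -/
noncomputable def augVal (μ : Polynomial K → WithTop Λ) (φ : Polynomial K) (γ : WithTop Λ)
    (f : Polynomial K) : WithTop Λ :=
  (Finset.range (f.natDegree + 1)).inf fun s => μ (adicCoeff φ f s) + s • γ

end Preamble


section VFAux

variable {Λ : Type*} [AddCommGroup Λ] [LinearOrder Λ] [IsOrderedAddMonoid Λ]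

theorem VFAux.val_neg {A : Type*} [CommRing A] {vbar : A → WithTop Λ} (h : IsVal vbar)
    (a : A) : vbar (-a) = vbar a := by
  have h1 : vbar (-1 : A) + vbar (-1) = 0 := by
    rw [← h.2.2.1]; simpa using h.2.1
  have h2 : vbar (-1 : A) = 0 := by
    cases hc : vbar (-1 : A) with
    | top => rw [hc] at h1; simp at h1
    | coe b =>
      rw [hc, ← WithTop.coe_add] at h1
      have hb : b + b = 0 := by exact_mod_cast h1
      have hb0 : b = 0 := by
        rcases lt_trichotomy b 0 with h' | h' | h'
        · exact absurd hb (by have := add_lt_add h' h'; simpa using this.ne)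
        · exact h'
        · exact absurd hb (by have := add_lt_add h' h'; simpa using this.ne')
      simp [hb0]
  calc vbar (-a) = vbar ((-1) * a) := by ring_nf
    _ = vbar (-1 : A) + vbar a := h.2.2.1 _ _
    _ = vbar a := by rw [h2, zero_add]

theorem VFAux.val_prod {A : Type*} [CommRing A] {vbar : A → WithTop Λ} (h : IsVal vbar)
    (m : Multiset A) : vbar m.prod = (m.map vbar).sum := by
  induction m using Multiset.induction with
  | empty => simpa using h.2.1
  | cons a s ih => simp [h.2.2.1, ih]

theorem VFAux.sum_comm' {β γ : Type*} (S : Multiset β) (T : Multiset γ)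
    (f : β → γ → WithTop Λ) :
    (S.map (fun t => (T.map (fun u => f t u)).sum)).sum
      = (T.map (fun u => (S.map (fun t => f t u)).sum)).sum := by
  induction S using Multiset.induction with
  | empty => simp
  | cons a s ih =>
    simp only [Multiset.map_cons, Multiset.sum_cons, ih]
    rw [← Multiset.sum_map_add]

end VFAux

/-- for monic irreducible `F, G` over a henselian field,
`v_F(G)/deg G = v_G(F)/deg F`, and both equal `v(Res(F,G))/(deg F · deg G)`, where
`Res(F,G) = ∏_{θ_i ∈ Z(F)} G(θ_i)` (stated by cross-multiplication). -/
theorem vF_symmetry {K : Type*} [Field K] {Λ : Type*} [AddCommGroup Λ] [LinearOrder Λ]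
    [IsOrderedAddMonoid Λ]
    (v : K → WithTop Λ) (hv : IsVal v)
    (vbar : AlgebraicClosure K → WithTop Λ) (hvbar : IsVal vbar)
    (hextbar : ∀ a : K, vbar (algebraMap K (AlgebraicClosure K) a) = v a)
    (hhens : ∀ w : AlgebraicClosure K → WithTop Λ, IsVal w →
      (∀ a : K, w (algebraMap K (AlgebraicClosure K) a) = v a) → w = vbar)
    (F G : Polynomial K) (hFm : F.Monic) (hFirr : Irreducible F)
    (hGm : G.Monic) (hGirr : Irreducible G)
    (θ ω : AlgebraicClosure K) (hθ : Polynomial.aeval θ F = 0)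
    (hω : Polynomial.aeval ω G = 0) :
    F.natDegree • vbar (Polynomial.aeval θ G) = G.natDegree • vbar (Polynomial.aeval ω F) ∧
    F.natDegree • vbar (Polynomial.aeval θ G) =
      vbar (((F.aroots (AlgebraicClosure K)).map
        (fun t => Polynomial.aeval t G)).prod) := by
  let A := AlgebraicClosure K
  -- conjugation invariance
  have key : ∀ (P Q : Polynomial K), P.Monic → Irreducible P → ∀ x y : A,
      Polynomial.aeval x P = 0 → Polynomial.aeval y P = 0 →
      vbar (Polynomial.aeval x Q) = vbar (Polynomial.aeval y Q) := by
    intro P Q hPm hPirr x y hx hy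
    have hminx : minpoly K x = P := (minpoly.eq_of_irreducible_of_monic hPirr hx hPm).symm
    have hminy : minpoly K y = P := (minpoly.eq_of_irreducible_of_monic hPirr hy hPm).symm
    obtain ⟨σ, hσ⟩ := (Normal.minpoly_eq_iff_mem_orbit (E := A)).mp (hminx.trans hminy.symm)
    have hw : IsVal (fun z : A => vbar (σ z)) := by
      refine ⟨by simp [hvbar.1], by simp [hvbar.2.1], fun a b => by
        simp only [map_mul]; exact hvbar.2.2.1 _ _, fun a b => by
        simp only [map_add]; exact hvbar.2.2.2 _ _⟩
    have hwe : ∀ a : K, (fun z : A => vbar (σ z)) (algebraMap K A a) = v a := by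
      intro a; simp [σ.commutes a, hextbar a]; exact hextbar a
    have hweq := hhens _ hw hwe
    have : σ y = x := hσ
    calc vbar (Polynomial.aeval x Q) = vbar (Polynomial.aeval (σ y) Q) := by rw [this]
      _ = vbar (σ (Polynomial.aeval y Q)) := by rw [Polynomial.aeval_algHom_apply]
      _ = vbar (Polynomial.aeval y Q) := congrFun hweq _
  have hsplitsG : (G.map (algebraMap K A)).Splits :=
    IsAlgClosed.splits _
  have hsplitsF : (F.map (algebraMap K A)).Splits :=
    IsAlgClosed.splits _
  have hGfac : G.map (algebraMap K A) = ((G.aroots A).map fun a : A => X - C a).prod :=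
    hsplitsG.eq_prod_roots_of_monic (hGm.map _)
  have hFfac : F.map (algebraMap K A) = ((F.aroots A).map fun a : A => X - C a).prod :=
    hsplitsF.eq_prod_roots_of_monic (hFm.map _)
  have hevalG : ∀ x : A, Polynomial.aeval x G = ((G.aroots A).map fun a => x - a).prod := by
    intro x
    rw [Polynomial.aeval_def, ← Polynomial.eval_map, hGfac, Polynomial.eval_multiset_prod,
      Multiset.map_map]
    simp
  have hevalF : ∀ x : A, Polynomial.aeval x F = ((F.aroots A).map fun a => x - a).prod := by
    intro x
    rw [Polynomial.aeval_def, ← Polynomial.eval_map, hFfac, Polynomial.eval_multiset_prod,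
      Multiset.map_map]
    simp
  have hcardF : Multiset.card (F.aroots A) = F.natDegree := by
    rw [Polynomial.splits_iff_card_roots.mp hsplitsF, Polynomial.natDegree_map]
  have hcardG : Multiset.card (G.aroots A) = G.natDegree := by
    rw [Polynomial.splits_iff_card_roots.mp hsplitsG, Polynomial.natDegree_map]
  have hF0 : F ≠ 0 := hFm.ne_zero
  have hG0 : G ≠ 0 := hGm.ne_zero
  -- sum over roots of F of vbar (G(t)) is constant
  have constF : ((F.aroots A).map (fun t => vbar (Polynomial.aeval t G))).sum
      = F.natDegree • vbar (Polynomial.aeval θ G) := by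
    rw [Multiset.map_congr rfl (fun t ht => key F G hFm hFirr t θ
      ((Polynomial.mem_aroots.mp ht).2) hθ)]
    simp [hcardF]
  have constG : ((G.aroots A).map (fun u => vbar (Polynomial.aeval u F))).sum
      = G.natDegree • vbar (Polynomial.aeval ω F) := by
    rw [Multiset.map_congr rfl (fun u hu => key G F hGm hGirr u ω
      ((Polynomial.mem_aroots.mp hu).2) hω)]
    simp [hcardG]
  have stepG : ∀ t : A, vbar (Polynomial.aeval t G)
      = ((G.aroots A).map (fun u => vbar (t - u))).sum := by
    intro t; rw [hevalG t, VFAux.val_prod hvbar, Multiset.map_map]; rfl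
  have stepF : ∀ u : A, vbar (Polynomial.aeval u F)
      = ((F.aroots A).map (fun t => vbar (u - t))).sum := by
    intro u; rw [hevalF u, VFAux.val_prod hvbar, Multiset.map_map]; rfl
  have dbl : ((F.aroots A).map (fun t => vbar (Polynomial.aeval t G))).sum
      = ((G.aroots A).map (fun u => vbar (Polynomial.aeval u F))).sum := by
    calc ((F.aroots A).map (fun t => vbar (Polynomial.aeval t G))).sum
        = ((F.aroots A).map (fun t => ((G.aroots A).map (fun u => vbar (t - u))).sum)).sum := by
          rw [Multiset.map_congr rfl (fun t _ => stepG t)]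
      _ = ((G.aroots A).map (fun u => ((F.aroots A).map (fun t => vbar (t - u))).sum)).sum :=
          VFAux.sum_comm' _ _ _
      _ = ((G.aroots A).map (fun u => vbar (Polynomial.aeval u F))).sum := by
          refine congrArg _ (Multiset.map_congr rfl fun u _ => ?_)
          rw [stepF u]
          refine congrArg _ (Multiset.map_congr rfl fun t _ => ?_)
          rw [← VFAux.val_neg hvbar (u - t), neg_sub]
  have main2 : vbar (((F.aroots A).map (fun t => Polynomial.aeval t G)).prod)
      = ((F.aroots A).map (fun t => vbar (Polynomial.aeval t G))).sum := by
    rw [VFAux.val_prod hvbar, Multiset.map_map]; rfl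
  constructor
  · rw [← constF, dbl, constG]
  · rw [main2, constF]
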